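/- arXiv:2006.00072 — 3 statements merged into one kernel-verified Lean document; each statement's English description precedes it below -/
import Mathlib

section
/- Let (A,d,μ) and (A',d',μ') be A∞-algebras over a commutative unital ring R, and let M := Hom_R(C(A),↑A') with differential ∂, filtration F_rM, and operations Q¹ₙ as defined. Then for every degree 0 element F¹ ∈ M₀, the series R(F) := Σ_{n≥1} Q¹ₙ(F¹^{⊗n}) converges in the complete filtered dg module M to a well-defined element of M_{−1}, so that F¹ ↦ R(F) is a well-defined set-theoretic function M₀ → M_{−1}; moreover R(F) = 0 if and only if the coalgebra morphism F : C(A) → C(A') corresponding to F¹ is a morphism of dg coalgebras, i.e., δ'∘F = F∘δ. -/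
/-!
# A common framework for `A∞`-algebras over a commutative ring

A (homologically) ℤ-graded `R`-module is encoded as a family `V : ℤ → Type` of
`R`-modules.  Throughout, all A∞-data is encoded by its *bar components*:
for an A∞-algebra `(A, d, μ)` the family `V` stands for the suspension `↑A`
(so `V k = A (k-1)`), and the structure is recorded through the components of
the bar codifferential, `op 1 = ↑∘d∘↓` and `op n = ↑∘μₙ∘↓^{⊗n}` (`n ≥ 2`),
all of which are homogeneous of degree `-1`.  Likewise a weak A∞-morphism
`(f₁, f₂, …)` is recorded through its bar components `F¹ₙ = ↑∘fₙ∘↓^{⊗n}`,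
homogeneous of degree `0`.  This passage is the bijective correspondence
`μ ↔ δ`, `f ↔ F` described in the paper.

A map out of the tensor power `(↑A)^{⊗n}` into a graded module corresponds to
a multilinear map on the direct sum `⨁ₖ V k` (evaluated on tuples of
homogeneous elements); equalities of such maps are recorded by their values on
all tuples of homogeneous elements, which generate the tensor power.
All Koszul signs are explicit.
-/

open DirectSum Finset

namespace AInf

variable (R : Type) [CommRing R]

/-- The underlying module `⨁ₖ V k` of a graded module. -/
abbrev GTot (V : ℤ → Type) [∀ k, AddCommGroup (V k)] [∀ k, Module R (V k)] : Type :=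
  ⨁ k, V k

/-- A homogeneous element: a degree together with an element of that component. -/
abbrev GElt (V : ℤ → Type) : Type := (k : ℤ) × V k

variable (V V' V'' : ℤ → Type)
variable [∀ k, AddCommGroup (V k)] [∀ k, Module R (V k)]
variable [∀ k, AddCommGroup (V' k)] [∀ k, Module R (V' k)]
variable [∀ k, AddCommGroup (V'' k)] [∀ k, Module R (V'' k)]

/-- Inclusion of a homogeneous element into the direct sum. -/
def inclS (z : GElt V) : GTot R V := DirectSum.lof R ℤ V z.1 z.2

/-- Projection onto the degree `k` component. -/
def cmp (k : ℤ) : GTot R V →ₗ[R] V k := DirectSum.component R ℤ V k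

/-- Extend a finite tuple to `ℕ`, by a default value. -/
def extd {α : Sort*} (dflt : α) {n : ℕ} (w : Fin n → α) : ℕ → α :=
  fun j => if h : j < n then w ⟨j, h⟩ else dflt

/-- Extend a tuple of homogeneous elements by `0` (placed in degree `0`). -/
def extS {n : ℕ} (w : Fin n → GElt V) : ℕ → GElt V := extd ⟨0, 0⟩ w

/-- Sum of the degrees of the first `i` slots. -/
def dsum (w : ℕ → GElt V) (i : ℕ) : ℤ := ∑ j ∈ Finset.range i, (w j).1

/-- The sign `(-1)^e` for an integer `e`, as an integer scalar. -/
def sgn (e : ℤ) : ℤ := (-1) ^ e.natAbs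

/-- A family of `n`-ary operations `(↑A)^{⊗n} → ↑A'` (one for each arity `n ≥ 0`;
the arity-0 component is required to vanish wherever it matters), encoded as
multilinear maps on the direct sums. -/
abbrev Ops : Type :=
  (n : ℕ) → MultilinearMap R (fun _ : Fin n => GTot R V) (GTot R V')

/-- Evaluate the arity-`m` member of a family on the first `m` slots of an
`ℕ`-indexed tuple of homogeneous elements. -/
def evalAt (φ : Ops R V V') (m : ℕ) (w : ℕ → GElt V) : GTot R V' :=
  φ m (fun t => inclS R V (w t.val))

/-- A multilinear map is homogeneous of degree `d` if its value on homogeneous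
elements of degrees `k₁, …, kₙ` lies in the component of degree `k₁+⋯+kₙ+d`. -/
def IsHomog {n : ℕ} (φ : MultilinearMap R (fun _ : Fin n => GTot R V) (GTot R V')) (d : ℤ) :
    Prop :=
  ∀ w : Fin n → GElt V,
    φ (fun i => inclS R V (w i)) ∈ LinearMap.range (DirectSum.lof R ℤ V' ((∑ i, (w i).1) + d))

/-- The tuple obtained from `w` by replacing the slots `[i, i+l)` by the value of
the degree `-1` operation `inner l` on them (this encodes `1^{⊗i} ⊗ D¹_l ⊗ 1^{⊗j}`
applied to a tensor of homogeneous elements, without the Koszul prefix sign). -/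
def insIn (inner : Ops R V V) (l i : ℕ) (w : ℕ → GElt V) : ℕ → GElt V := fun t =>
  if t < i then w t
  else if t = i then
    ⟨(∑ s ∈ Finset.range l, (w (i + s)).1) - 1,
      cmp R V ((∑ s ∈ Finset.range l, (w (i + s)).1) - 1)
        (inner l (fun s : Fin l => inclS R V (w (i + s.val))))⟩
  else w (t + l - 1)

/-- The value of `∑_{k=1}^n outer¹_k ∘ innerᵏ_n` on a tensor of homogeneous
elements, where `inner` is a degree `-1` coderivation-type family (with its
Koszul prefix signs) and `outer` is any family (e.g. this computes `F ∘ δ` or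
`δ ∘ δ` componentwise). -/
def codiffSum (outer : Ops R V V') (inner : Ops R V V) (n : ℕ) (w : ℕ → GElt V) :
    GTot R V' :=
  ∑ l ∈ Finset.Icc 1 n, ∑ i ∈ Finset.range (n - l + 1),
    sgn (dsum V w i) • evalAt R V V' outer (n - l + 1) (insIn R V inner l i w)

/-- The value of `∑_{k=1}^n outer¹_k ∘ Fᵏ_n` on a tensor of homogeneous elements,
where `F` is the coalgebra morphism with components `fs` (degree `0`, so no
Koszul signs occur): the sum is over all compositions of `n`.  This computes
`δ' ∘ F` componentwise. -/
def morphSum (fs : Ops R V V') (outer : Ops R V' V'') (n : ℕ) (w : ℕ → GElt V) :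
    GTot R V'' :=
  ∑ c : Composition n,
    outer c.length (fun q =>
      fs (c.blocksFun q) (fun s => inclS R V (w (c.sizeUpTo q.val + s.val))))

/-- An A∞-algebra structure, recorded through the components of its bar
codifferential `δ` on `C(A) = T^c(↑A)`:  `op 1 = ↑∘d∘↓` and `op n = ↑∘μₙ∘↓^{⊗n}`,
all homogeneous of degree `-1`, with `∑_{k=1}^n δ¹_k ∘ δᵏ_n = 0` for all `n`. -/
structure AInfty : Type where
  op : Ops R V V
  op_zero : op 0 = 0
  homog : ∀ n, IsHomog R V V (op n) (-1)
  codiff : ∀ (n : ℕ) (w : Fin n → GElt V),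
    codiffSum R V V op op n (extS V w) = 0

/-- A weak A∞-morphism, recorded through the components `F¹ₙ = ↑∘fₙ∘↓^{⊗n}` of
the corresponding morphism of dg coalgebras `(C(A),δ) → (C(A'),δ')`: they are
homogeneous of degree `0` and satisfy `∑ δ'¹_k∘Fᵏ_n = ∑ F¹_k∘δᵏ_n` for all `n`. -/
structure AIHom (a : AInfty R V) (b : AInfty R V') : Type where
  f : Ops R V V'
  f_zero : f 0 = 0
  homog : ∀ n, IsHomog R V V' (f n) 0
  comm : ∀ (n : ℕ) (w : Fin n → GElt V),
    morphSum R V V' V' f b.op n (extS V w) = codiffSum R V V' f a.op n (extS V w)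

/-- An arity-1 multilinear map, as a linear map. -/
def lin1 {M N : Type} [AddCommGroup M] [Module R M] [AddCommGroup N] [Module R N]
    (φ : MultilinearMap R (fun _ : Fin 1 => M) N) : M →ₗ[R] N :=
  (MultilinearMap.ofSubsingleton R M N (0 : Fin 1)).symm φ

/-- The cast along an equality of degrees. -/
def gcast {j k : ℤ} (h : j = k) : V j ≃ₗ[R] V k := h ▸ LinearEquiv.refl R (V j)

/-- The differential of an A∞-algebra, extracted degreewise from `op 1`
(conjugating by the suspension: this is `d = ↓ ∘ (op 1) ∘ ↑`). -/
def dOf (a : AInfty R V) (k : ℤ) : V k →ₗ[R] V (k - 1) :=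
  (cmp R V (k - 1)) ∘ₗ (lin1 R (a.op 1)) ∘ₗ (DirectSum.lof R ℤ V k)

/-- A degree `-1` differential on a graded module. -/
abbrev Diff : Type := ∀ k : ℤ, V k →ₗ[R] V (k - 1)

/-- Squaring to zero for a degreewise differential. -/
def DiffSq (d : Diff R V) : Prop := ∀ (k : ℤ) (x : V k), d (k - 1) (d k x) = 0

/-- A chain map of graded complexes (a degree `0` map commuting with the
differentials). -/
def IsChainMapD (dA : Diff R V) (dB : Diff R V') (f : ∀ k, V k →ₗ[R] V' k) : Prop :=
  ∀ (k : ℤ) (x : V k), f (k - 1) (dA k x) = dB k (f k x)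

/-- `h` is a chain homotopy between the chain maps `f` and `g`:
`f - g = d'h + hd`. -/
def IsHomotopyD (dA : Diff R V) (dB : Diff R V') (f g : ∀ k, V k →ₗ[R] V' k)
    (h : ∀ k, V k →ₗ[R] V' (k + 1)) : Prop :=
  ∀ (k : ℤ) (x : V k),
    f k x - g k x
      = gcast R V' (by omega : k + 1 - 1 = k) (dB (k + 1) (h k x))
        + gcast R V' (by omega : k - 1 + 1 = k) (h (k - 1) (dA k x))

/-- `f` is a chain homotopy equivalence: it is a chain map and there are a chain
map `g` in the opposite direction and homotopies `h : gf ≃ id`, `l : fg ≃ id`. -/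
def IsChainHtpyEquivD (dA : Diff R V) (dB : Diff R V') (f : ∀ k, V k →ₗ[R] V' k) : Prop :=
  IsChainMapD R V V' dA dB f ∧
  ∃ g : ∀ k, V' k →ₗ[R] V k, IsChainMapD R V' V dB dA g ∧
    (∃ h : ∀ k, V k →ₗ[R] V (k + 1),
      IsHomotopyD R V V dA dA (fun k => (g k).comp (f k)) (fun _ => LinearMap.id) h) ∧
    (∃ l : ∀ k, V' k →ₗ[R] V' (k + 1),
      IsHomotopyD R V' V' dB dB (fun k => (f k).comp (g k)) (fun _ => LinearMap.id) l)

/-- A cycle of the complex `(V, d)`. -/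
def IsCycleD (dA : Diff R V) {k : ℤ} (x : V k) : Prop := dA k x = 0

/-- A boundary of the complex `(V, d)`. -/
def IsBoundaryD (dA : Diff R V) {k : ℤ} (x : V k) : Prop :=
  ∃ y : V (k + 1), gcast R V (by omega : k + 1 - 1 = k) (dA (k + 1) y) = x

/-- `f` induces an isomorphism on homology in every degree (stated elementwise:
injectivity and surjectivity of the induced map on homology classes). -/
def InducesHomologyIso (dA : Diff R V) (dB : Diff R V') (f : ∀ k, V k →ₗ[R] V' k) : Prop :=
  (∀ (k : ℤ) (x : V k), IsCycleD R V dA x → IsBoundaryD R V' dB (f k x) →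
      IsBoundaryD R V dA x) ∧
  (∀ (k : ℤ) (y : V' k), IsCycleD R V' dB y →
      ∃ x : V k, IsCycleD R V dA x ∧ IsBoundaryD R V' dB (f k x - y))

/-- The (bar component of the) linear part of a weak A∞-morphism, degreewise. -/
def linPart {a : AInfty R V} {b : AInfty R V'} (F : AIHom R V V' a b) (k : ℤ) :
    V k →ₗ[R] V' k :=
  (cmp R V' k) ∘ₗ (lin1 R (F.f 1)) ∘ₗ (DirectSum.lof R ℤ V k)

/-- The weak A∞-morphism `F` extends the chain map `f₁`. -/
def Extends {a : AInfty R V} {b : AInfty R V'} (F : AIHom R V V' a b)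
    (f₁ : ∀ k, V k →ₗ[R] V' k) : Prop :=
  ∀ z : GElt V, F.f 1 (fun _ => inclS R V z) = inclS R V' ⟨z.1, f₁ z.1 z.2⟩

/-- `ν` together with a weak A∞-morphism from `a` extending the chain map `f₁`
is a transfer of `a` over `f₁`. -/
def IsTransfer (a : AInfty R V) (f₁ : ∀ k, V k →ₗ[R] V' k) (ν : AInfty R V') : Prop :=
  ∃ F : AIHom R V V' a ν, Extends R V V' F f₁

/-- An isotopy is a weak A∞-morphism whose linear part is the identity. -/
def IsIsotopy {a b : AInfty R V} (F : AIHom R V V a b) : Prop :=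
  ∀ z : GElt V, F.f 1 (fun _ => inclS R V z) = inclS R V z

/-- A weak isomorphism is a weak A∞-morphism whose linear part is an
isomorphism of the underlying chain complexes. -/
def IsWeakIso {a : AInfty R V} {b : AInfty R V'} (F : AIHom R V V' a b) : Prop :=
  ∃ e : ∀ k, V k ≃ₗ[R] V' k,
    ∀ z : GElt V, F.f 1 (fun _ => inclS R V z) = inclS R V' ⟨z.1, e z.1 z.2⟩

/-- A quasi-isomorphism of A∞-algebras: a weak A∞-morphism whose linear part
induces an isomorphism on homology. -/
def IsQIso {a : AInfty R V} {b : AInfty R V'} (F : AIHom R V V' a b) : Prop :=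
  InducesHomologyIso R V V' (dOf R V a) (dOf R V' b) (linPart R V V' F)

/-- The total linear map `⨁ V → ⨁ V'` induced by a degree `0` family. -/
def tmapD (f : ∀ k, V k →ₗ[R] V' k) : GTot R V →ₗ[R] GTot R V' :=
  DirectSum.toModule R ℤ _ (fun k => (DirectSum.lof R ℤ V' k) ∘ₗ f k)

/-- A strict isomorphism between two A∞-structures on the same complex:
an automorphism `e` of the underlying graded module intertwining all the
structure operations (the arity-1 case states that `e` is a chain map). -/
def IsStrictIso (a b : AInfty R V) (e : ∀ k, V k ≃ₗ[R] V k) : Prop :=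
  ∀ (n : ℕ) (w : Fin n → GElt V),
    tmapD R V V (fun k => (e k : V k →ₗ[R] V k)) (a.op n (fun i => inclS R V (w i)))
      = b.op n (fun i => inclS R V ⟨(w i).1, e (w i).1 (w i).2⟩)

end AInf

namespace AInf

variable (R : Type) [CommRing R]
variable (V V' : ℤ → Type)
variable [∀ k, AddCommGroup (V k)] [∀ k, Module R (V k)]
variable [∀ k, AddCommGroup (V' k)] [∀ k, Module R (V' k)]

/-!
## The hom complex `M = Hom_R(C(A), ↑A')` and the operations `Q¹ₙ`

An element of the graded module `M ≅ Π_{n≥1} Hom_R((↑A)^{⊗n}, ↑A')` is a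
family in `Ops R V V'` whose arity-`0` component vanishes; the element is
homogeneous of degree `m` if all its components are (`memMh`).  Maps out of
tensor powers of `M` and elements of `M` produced by the operations `Q¹ₙ` are
recorded through their value functions (`RawM`): the value of the arity-`k`
component on any tuple of homogeneous elements of `C(A)`; tensors of
homogeneous elements generate everything in sight, so this records the
operations faithfully.  All Koszul signs (with respect to both the internal
grading of `C(A)` and the degrees in `M`) are explicit.
-/

/-- A value function: for every arity `k`, a value on every (ℕ-extended) tuple
of homogeneous elements of `C(A)`.  Every element of `M` determines one
(`rawOf`), as do the results of the operations `Q¹ₙ`. -/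
abbrev RawM : Type := (k : ℕ) → (ℕ → GElt V) → GTot R V'

/-- The value function of an element of `M`. -/
def rawOf (F : Ops R V V') : RawM R V V' :=
  fun k w => F k (fun t : Fin k => inclS R V (w t.val))

/-- Membership of the degree-`m` homogeneous component of
`M = Hom_R(C(A),↑A')`. -/
def memMh (F : Ops R V V') (m : ℤ) : Prop :=
  F 0 = 0 ∧ ∀ n, IsHomog R V V' (F n) m

/-- The value function of `Q¹₁(G) = ∂G = δ'¹₁∘G − (−1)^e G∘δ`, for `G` of
degree `e`. -/
def QoneVal (aops : Ops R V V) (bops : Ops R V' V') (e : ℤ) (G : RawM R V V') :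
    RawM R V V' :=
  fun k w =>
    lin1 R (bops 1) (G k w)
      - sgn e • ∑ l ∈ Finset.Icc 1 k, ∑ i ∈ Finset.range (k - l + 1),
          sgn (dsum V w i) • G (k - l + 1) (insIn R V aops l i w)

/-- The value function of
`Q¹_p(F₍₁₎⊗…⊗F₍p₎) = δ'¹_p ∘ (F₍₁₎⊗…⊗F₍p₎) ∘ Δ̄^{p-1}` for `p ≥ 2`:
a sum over all compositions of the arity `k` into `p` blocks, with the Koszul
sign of moving each `F₍q₎` (of degree `degs q`) past the blocks preceding it. -/
def QhiVal (bops : Ops R V' V') (p : ℕ) (degs : Fin p → ℤ)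
    (args : Fin p → RawM R V V') : RawM R V V' :=
  fun k w =>
    ∑ c : Composition k,
      if h : c.length = p then
        sgn (∑ q : Fin p, degs q * dsum V w (c.sizeUpTo q.val)) •
          bops p (fun q =>
            args q (c.blocksFun (Fin.cast h.symm q))
              (fun j => w (c.sizeUpTo q.val + j)))
      else 0

/-- The value function of `Q¹_p`, for any `p` (with `Q¹₁ = ∂`). -/
def QVal (aops : Ops R V V) (bops : Ops R V' V') :
    (p : ℕ) → (degs : Fin p → ℤ) → (args : Fin p → RawM R V V') → RawM R V V'
  | 1, degs, args => QoneVal R V V' aops bops (degs 0) (args 0)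
  | p, degs, args => QhiVal R V V' bops p degs args

/-- The degrees of the arguments of `Qᵏ_n` applied at position `i` with inner
arity `l`: the inserted element `Q¹_l(…)` has degree `(∑ degrees) − 1`. -/
def degsIns (degs : ℕ → ℤ) (l i : ℕ) : ℕ → ℤ := fun t =>
  if t < i then degs t
  else if t = i then (∑ s ∈ Finset.range l, degs (i + s)) - 1
  else degs (t + l - 1)

/-- The arguments of `Qᵏ_n` applied at position `i` with inner arity `l`:
insertion of `Q¹_l` of the `l` consecutive arguments starting at slot `i`. -/
def argsIns (aops : Ops R V V) (bops : Ops R V' V')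
    (args : ℕ → RawM R V V') (degs : ℕ → ℤ) (l i : ℕ) : ℕ → RawM R V V' := fun t =>
  if t < i then args t
  else if t = i then
    QVal R V V' aops bops l (fun s : Fin l => degs (i + s.val))
      (fun s : Fin l => args (i + s.val))
  else args (t + l - 1)

end AInf

namespace AInf

variable {R : Type} [CommRing R]
variable (V V' : ℤ → Type)
variable [∀ k, AddCommGroup (V k)] [∀ k, Module R (V k)]
variable [∀ k, AddCommGroup (V' k)] [∀ k, Module R (V' k)]

lemma QVal_one (aops : Ops R V V) (bops : Ops R V' V') (degs : Fin 1 → ℤ)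
    (args : Fin 1 → RawM R V V') :
    QVal R V V' aops bops 1 degs args = QoneVal R V V' aops bops (degs 0) (args 0) := rfl

lemma QVal_of_ne_one (aops : Ops R V V) (bops : Ops R V' V') {p : ℕ} (hp : p ≠ 1)
    (degs : Fin p → ℤ) (args : Fin p → RawM R V V') :
    QVal R V V' aops bops p degs args = QhiVal R V V' bops p degs args := by
  match p with
  | 0 => rfl
  | 1 => exact absurd rfl hp
  | p + 2 => rfl

lemma sgn_zero : sgn 0 = 1 := rfl

lemma op_of_len_zero (φ : Ops R V' V') (hφ : φ 0 = 0) {m : ℕ} (h : m = 0)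
    (args : Fin m → GTot R V') : φ m args = 0 := by
  subst h
  rw [hφ]
  rfl

lemma eval_congr (φ : Ops R V V') {m m' : ℕ} (h : m' = m) (u : Fin m → GElt V)
    (u' : Fin m' → GElt V) (hu : ∀ j : Fin m', u' j = u (Fin.cast h j)) :
    φ m' (fun t => inclS R V (u' t)) = φ m (fun t => inclS R V (u t)) := by
  subst h
  congr 1
  funext t
  rw [hu]
  rfl

lemma key_sum (a : AInfty R V) (b : AInfty R V') (F : Ops R V V') (k : ℕ) (w : ℕ → GElt V) :
    (∑ n ∈ Finset.Icc 1 k,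
        QVal R V V' a.op b.op n (fun _ => 0) (fun _ => rawOf R V V' F) k w)
      = morphSum R V V' V' F b.op k w - codiffSum R V V' F a.op k w := by
  rcases Nat.eq_zero_or_pos k with hk | hk
  · subst hk
    have h1 : morphSum R V V' V' F b.op 0 w = 0 := by
      refine Finset.sum_eq_zero fun c _ => ?_
      exact op_of_len_zero V' b.op b.op_zero (Nat.le_zero.mp c.length_le) _
    have h2 : codiffSum R V V' F a.op 0 w = 0 := by
      simp [codiffSum]
    simp [h1, h2]
  -- the length-1 compositions term
  set termc : Composition k → GTot R V' := fun c =>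
    b.op c.length (fun q =>
      F (c.blocksFun q) (fun s => inclS R V (w (c.sizeUpTo q.val + s.val)))) with htermc
  have stepA : ∀ n ∈ Finset.Icc 1 k,
      QVal R V V' a.op b.op n (fun _ => 0) (fun _ => rawOf R V V' F) k w
        = (∑ c : Composition k, if c.length = n then termc c else 0)
          - (if n = 1 then codiffSum R V V' F a.op k w else 0) := by
    intro n hn
    by_cases h1 : n = 1
    · subst h1
      rw [if_pos rfl]
      rw [QVal_one]
      unfold QoneVal
      have hcod : (∑ l ∈ Finset.Icc 1 k, ∑ i ∈ Finset.range (k - l + 1),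
          sgn (dsum V w i) • rawOf R V V' F (k - l + 1) (insIn R V a.op l i w))
            = codiffSum R V V' F a.op k w := rfl
      rw [sgn_zero, one_smul, hcod]
      congr 1
      -- lin1 part equals the single length-1 composition term
      rw [Finset.sum_eq_single_of_mem (Composition.single k hk) (Finset.mem_univ _)
        (fun c _ hc => by
          rw [if_neg]
          intro hlen
          exact hc ((Composition.eq_single_iff_length hk).mpr hlen))]
      rw [if_pos (Composition.single_length hk)]
      show b.op 1 (fun _ => F k (fun t : Fin k => inclS R V (w t.val))) = _
      have hlen : (Composition.single k hk).length = 1 := Composition.single_length hk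
      congr 1
      funext q
      have hq : q.val = 0 := by omega
      refine (eval_congr V V' F (Composition.single_blocksFun hk q) (fun t : Fin k => w t.val) _ fun j => ?_).symm
      simp [hq, Composition.sizeUpTo_zero]
    · rw [if_neg h1, sub_zero, QVal_of_ne_one V V' a.op b.op h1]
      unfold QhiVal
      refine Finset.sum_congr rfl fun c _ => ?_
      by_cases h : c.length = n
      · rw [dif_pos h, if_pos h]
        subst h
        have hs : (∑ q : Fin c.length, (fun _ : Fin c.length => (0:ℤ)) q
            * dsum V w (c.sizeUpTo q.val)) = 0 := by simp
        rw [hs, sgn_zero, one_smul]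
        rfl
      · rw [dif_neg h, if_neg h]
  rw [Finset.sum_congr rfl stepA, Finset.sum_sub_distrib]
  congr 1
  · rw [Finset.sum_comm]
    refine Finset.sum_congr rfl fun c _ => ?_
    rw [Finset.sum_ite_eq, if_pos]
    rw [Finset.mem_Icc]
    exact ⟨c.length_pos_of_pos hk, c.length_le⟩
  · rw [Finset.sum_ite_eq', if_pos]
    rw [Finset.mem_Icc]
    omega

/-- Lemma `lemma:Ainf-hom`(2).  For a degree `0` element
`F¹ ∈ M₀` of `M = Hom_R(C(A),↑A')`, the series `R(F) = ∑_{n≥1} Q¹ₙ(F¹^{⊗n})`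
converges in the complete filtered dg module `M`: on the arity-`k` component
all terms with `n > k` vanish, so `R(F)` is the well-defined element of
`M_{-1}` whose arity-`k` component is the finite sum `∑_{n=1}^{k}`.  Moreover
`R(F) = 0` if and only if the coalgebra morphism `F : C(A) → C(A')`
corresponding to `F¹` is a morphism of dg coalgebras, `δ'∘F = F∘δ`. -/
theorem statement9
    (a : AInfty R V) (b : AInfty R V')
    (F : Ops R V V') (hF : memMh R V V' F 0) :
    -- convergence: the terms of the series vanish on low-arity components
    (∀ (k : ℕ) (w : Fin k → GElt V) (n : ℕ), k < n →
      QVal R V V' a.op b.op n (fun _ => 0) (fun _ => rawOf R V V' F) k (extS V w) = 0) ∧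
    -- `R(F) = 0` iff `F` is a morphism of dg coalgebras
    ((∀ (k : ℕ) (w : Fin k → GElt V),
        (∑ n ∈ Finset.Icc 1 k,
          QVal R V V' a.op b.op n (fun _ => 0) (fun _ => rawOf R V V' F) k (extS V w)) = 0) ↔
      (∀ (n : ℕ) (w : Fin n → GElt V),
        morphSum R V V' V' F b.op n (extS V w)
          = codiffSum R V V' F a.op n (extS V w))) := by
  constructor
  · intro k w n hkn
    by_cases h1 : n = 1
    · subst h1
      interval_cases k
      rw [QVal_one]
      unfold QoneVal
      have : rawOf R V V' F 0 (extS V w) = 0 := by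
        unfold rawOf
        rw [hF.1]
        rfl
      simp [this]
    · rw [QVal_of_ne_one V V' a.op b.op h1]
      unfold QhiVal
      refine Finset.sum_eq_zero fun c _ => ?_
      rw [dif_neg]
      intro h
      exact absurd (h ▸ c.length_le) (by omega)
  · constructor
    · intro h n w
      have := h n w
      rw [key_sum] at this
      exact sub_eq_zero.mp this
    · intro h k w
      rw [key_sum, h k w, sub_self]

end AInf
end

section
/- Let (A,d,μ) and (A',d',μ') be A∞-algebras over a commutative unital ring R with bar constructions (C(A),δ) and (C(A'),δ'). Let m > 1 and let F¹₁,…,F¹_{m−1} be degree 0 linear maps F¹_k : C^k(A) → ↑A' such that the coalgebra morphism F determined by them satisfies (δ'∘F − F∘δ) restricted to C^{≤m−1}(A) equals 0, and let c_m(F) := Σ_{k=2}^m δ'¹_k∘F^k_m − Σ_{k=1}^{m−1} F¹_k∘δ^k_m. Then there exists a degree 0 linear map F̃¹_m : C^m(A) → ↑A' such that the coalgebra morphism F̃ : C(A) → C(A') determined by (F¹₁,…,F¹_{m−1},F̃¹_m,0,…) satisfies (δ'∘F̃ − F̃∘δ) restricted to C^{≤m}(A) equals 0 if and only if c_m(F)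 = −∂̄F̃¹_m, where ∂̄G = δ'¹₁∘G − (−1)^{|G|} G∘δ^m_m is the differential on Hom_R(C^m(A),↑A'). -/
/-!
# A common framework for `A∞`-algebras over a commutative ring

A (homologically) ℤ-graded `R`-module is encoded as a family `V : ℤ → Type` of
`R`-modules.  Throughout, all A∞-data is encoded by its *bar components*:
for an A∞-algebra `(A, d, μ)` the family `V` stands for the suspension `↑A`
(so `V k = A (k-1)`), and the structure is recorded through the components of
the bar codifferential, `op 1 = ↑∘d∘↓` and `op n = ↑∘μₙ∘↓^{⊗n}` (`n ≥ 2`),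
all of which are homogeneous of degree `-1`.  Likewise a weak A∞-morphism
`(f₁, f₂, …)` is recorded through its bar components `F¹ₙ = ↑∘fₙ∘↓^{⊗n}`,
homogeneous of degree `0`.  This passage is the bijective correspondence
`μ ↔ δ`, `f ↔ F` described in the paper.

A map out of the tensor power `(↑A)^{⊗n}` into a graded module corresponds to
a multilinear map on the direct sum `⨁ₖ V k` (evaluated on tuples of
homogeneous elements); equalities of such maps are recorded by their values on
all tuples of homogeneous elements, which generate the tensor power.
All Koszul signs are explicit.
-/

open DirectSum Finset

namespace AInf

variable (R : Type) [CommRing R]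
variable (V V' : ℤ → Type)
variable [∀ k, AddCommGroup (V k)] [∀ k, Module R (V k)]
variable [∀ k, AddCommGroup (V' k)] [∀ k, Module R (V' k)]

/-- The value of the obstruction cocycle
`c_m(F) = ∑_{k=2}^m δ'¹_k∘Fᵏ_m − ∑_{k=1}^{m-1} F¹_k∘δᵏ_m`
on a tensor of homogeneous elements, where `F` is the coalgebra morphism with
components `fs` and `δ, δ'` have components `aops, bops`.  (The sum over
compositions of length `≥ 2` computes `∑_{k=2}^m δ'¹_k∘Fᵏ_m`; under
`k = m - l + 1` the second sum is over insertions of `aops l` with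
`2 ≤ l ≤ m`.)  It only involves the components `fs 1, …, fs (m-1)`. -/
def obstrVal (bops : Ops R V' V') (fs : Ops R V V') (aops : Ops R V V)
    (m : ℕ) (w : ℕ → GElt V) : GTot R V' :=
  (∑ c : Composition m,
      if 2 ≤ c.length then
        bops c.length (fun q =>
          fs (c.blocksFun q) (fun s => inclS R V (w (c.sizeUpTo q.val + s.val))))
      else 0)
  - ∑ l ∈ Finset.Icc 2 m, ∑ i ∈ Finset.range (m - l + 1),
      sgn (dsum V w i) • evalAt R V V' fs (m - l + 1) (insIn R V aops l i w)

/-- The family `fs` satisfies the weak A∞-morphism identities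
(`δ'∘F = F∘δ` on `C^{≤m}(A)`) up to arity `m`. -/
def MorphUpTo (a : AInfty R V) (b : AInfty R V') (fs : Ops R V V') (m : ℕ) : Prop :=
  ∀ n ≤ m, ∀ w : Fin n → GElt V,
    morphSum R V V' V' fs b.op n (extS V w) = codiffSum R V V' fs a.op n (extS V w)

/-- The value of `∂̄g = δ'¹₁∘g − (−1)^e g∘δᵐ_m` on a tensor of homogeneous
elements, for `g : Hom(Cᵐ(A), ↑A')` of degree `e` given through its value
function `gval`; this is the differential of the quotient complex
`(Hom(Cᵐ(A),↑A'), ∂̄) ≅ (F_mM, ∂)/(F_{m+1}M, ∂)`. -/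
def dbarVal (bops : Ops R V' V') (aops : Ops R V V)
    (gval : (ℕ → GElt V) → GTot R V') (e : ℤ) (m : ℕ) (w : ℕ → GElt V) : GTot R V' :=
  lin1 R (bops 1) (gval w)
    - sgn e • ∑ i ∈ Finset.range m, sgn (dsum V w i) • gval (insIn R V aops 1 i w)

end AInf

namespace AInf

variable {R : Type} [CommRing R]
variable (V V' : ℤ → Type)
variable [∀ k, AddCommGroup (V k)] [∀ k, Module R (V k)]
variable [∀ k, AddCommGroup (V' k)] [∀ k, Module R (V' k)]

/-- `morphSum` only depends on the components of `fs` in arities `≤ n`. -/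
lemma morphSum_congr_aux (fs fs' : Ops R V V') (outer : Ops R V' V') (n : ℕ)
    (h : ∀ k ≤ n, fs k = fs' k) (w : ℕ → GElt V) :
    morphSum R V V' V' fs outer n w = morphSum R V V' V' fs' outer n w := by
  unfold morphSum
  refine Finset.sum_congr rfl fun c _ => ?_
  congr 1
  funext q
  rw [h _ (c.blocksFun_le q)]

/-- `codiffSum` only depends on the components of `outer` in arities `≤ n`. -/
lemma codiffSum_congr_aux (fs fs' : Ops R V V') (inner : Ops R V V) (n : ℕ)
    (h : ∀ k ≤ n, fs k = fs' k) (w : ℕ → GElt V) :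
    codiffSum R V V' fs inner n w = codiffSum R V V' fs' inner n w := by
  unfold codiffSum evalAt
  refine Finset.sum_congr rfl fun l hl => ?_
  rw [Finset.mem_Icc] at hl
  refine Finset.sum_congr rfl fun i _ => ?_
  rw [h (n - l + 1) (by omega)]

/-- Blocks of a composition of length at least `2` are strictly smaller than `n`. -/
lemma blocksFun_lt_aux {n : ℕ} (hn : 0 < n) {c : Composition n} (hc : 2 ≤ c.length)
    (q : Fin c.length) : c.blocksFun q < n :=
  (Composition.ne_single_iff hn).mp
    (fun h => by rw [h, Composition.single_length hn] at hc; omega) q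

/-- Splitting the sum over compositions into the single composition and those of
length `≥ 2`. -/
lemma sum_comp_split_aux {N : Type} [AddCommGroup N] (m : ℕ) (hm0 : 0 < m)
    (X : Composition m → N) :
    ∑ c : Composition m, X c
      = X (Composition.single m hm0)
        + ∑ c : Composition m, (if 2 ≤ c.length then X c else 0) := by
  have key : ∀ c : Composition m,
      X c = (if c.length = 1 then X c else 0) + (if 2 ≤ c.length then X c else 0) := by
    intro c
    have h1 : 0 < c.length := Composition.length_pos_of_pos c hm0
    rcases Nat.lt_or_ge c.length 2 with h | h
    · rw [if_pos (by omega), if_neg (by omega), add_zero]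
    · rw [if_neg (by omega), if_pos h, zero_add]
  rw [Finset.sum_congr rfl (fun c _ => key c), Finset.sum_add_distrib]
  congr 1
  rw [Finset.sum_eq_single_of_mem (Composition.single m hm0) (Finset.mem_univ _)
      (fun c _ hc => if_neg fun h => hc ((Composition.eq_single_iff_length hm0).mpr h))]
  exact if_pos (Composition.single_length hm0)

/-- Rearranging the arity-`m` morphism identity. -/
lemma key_iff_aux {N : Type} [AddCommGroup N] (L1 S1 S2 T : N) :
    (L1 + S2 = S1 + T) ↔ (S2 - T = -(L1 - S1)) := by
  rw [neg_sub, sub_eq_sub_iff_add_eq_add, add_comm S2 L1]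

/-- second part of Proposition `prop:obs`.  In the situation
of the obstruction cocycle: given degree `0` maps `F¹₁, …, F¹_{m-1}` (the
family `fs`, vanishing in arities `0` and `≥ m`) whose coalgebra morphism `F`
satisfies `(δ'∘F − F∘δ)|_{C^{≤m-1}(A)} = 0`, a degree `0` map
`F̃¹_m : Cᵐ(A) → ↑A'` makes the coalgebra morphism `F̃` determined by
`(F¹₁, …, F¹_{m-1}, F̃¹_m, 0, …)` satisfy `(δ'∘F̃ − F̃∘δ)|_{C^{≤m}(A)} = 0`
if and only if `c_m(F) = −∂̄F̃¹_m`, where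
`∂̄G = δ'¹₁∘G − (−1)^{|G|} G∘δᵐ_m` is the differential on `Hom_R(Cᵐ(A),↑A')`. -/
theorem statement13
    (a : AInfty R V) (b : AInfty R V')
    (m : ℕ) (hm : 1 < m)
    (fs : Ops R V V')
    (h0 : fs 0 = 0)
    (hhom : ∀ n, IsHomog R V V' (fs n) 0)
    (hvan : ∀ k, m ≤ k → fs k = 0)
    (hup : MorphUpTo R V V' a b fs (m - 1)) :
    ∀ g : MultilinearMap R (fun _ : Fin m => GTot R V) (GTot R V'),
      IsHomog R V V' g 0 →
      (MorphUpTo R V V' a b (Function.update fs m g) m ↔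
        ∀ w : Fin m → GElt V,
          obstrVal R V V' b.op fs a.op m (extS V w)
            = - dbarVal R V V' b.op a.op
                (fun w' => g (fun t => inclS R V (w' t.val))) 0 m (extS V w)) := by
  intro g hg
  have hm0 : 0 < m := by omega
  set fs' : Ops R V V' := Function.update fs m g with hfs'
  have hlt : ∀ k, k < m → fs' k = fs k := fun k hk =>
    Function.update_of_ne (by omega) _ _
  have hfm : fs' m = g := Function.update_self _ _ _
  -- Step 1: the identities in arities `< m` hold automatically.
  have step1 : MorphUpTo R V V' a b fs' m ↔
      ∀ w : Fin m → GElt V,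
        morphSum R V V' V' fs' b.op m (extS V w)
          = codiffSum R V V' fs' a.op m (extS V w) := by
    constructor
    · intro H w; exact H m le_rfl w
    · intro H n hn w
      rcases eq_or_lt_of_le hn with rfl | hlt'
      · exact H w
      · rw [← morphSum_congr_aux V V' fs fs' b.op n (fun k hk => (hlt k (by omega)).symm),
          ← codiffSum_congr_aux V V' fs fs' a.op n (fun k hk => (hlt k (by omega)).symm)]
        exact hup n (by omega) w
  rw [step1]
  -- Step 2: pointwise comparison of the arity-`m` identity with the cocycle equation.
  refine forall_congr' fun w => ?_
  set W := extS V w with hW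
  set L1 := lin1 R (b.op 1) (g (fun t => inclS R V (W t.val))) with hL1
  set S2 := ∑ c : Composition m,
      (if 2 ≤ c.length then
        b.op c.length (fun q =>
          fs (c.blocksFun q) (fun s => inclS R V (W (c.sizeUpTo q.val + s.val))))
      else 0) with hS2
  set T := ∑ l ∈ Finset.Icc 2 m, ∑ i ∈ Finset.range (m - l + 1),
      sgn (dsum V W i) • evalAt R V V' fs (m - l + 1) (insIn R V a.op l i W) with hT
  set S1 := ∑ i ∈ Finset.range m,
      sgn (dsum V W i) • g (fun t => inclS R V ((insIn R V a.op 1 i W) t.val)) with hS1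
  have hmorph : morphSum R V V' V' fs' b.op m W = L1 + S2 := by
    unfold morphSum
    rw [sum_comp_split_aux m hm0]
    congr 1
    · rw [hL1]
      show b.op 1 _ = b.op 1 _
      congr 1
      funext q
      rcases q with ⟨qv, hq⟩
      have : qv = 0 := by
        rw [Composition.single_length hm0] at hq; omega
      subst this
      show fs' m (fun s => inclS R V (W (0 + s.val))) = _
      rw [hfm]
      simp only [Nat.zero_add]
    · rw [hS2]
      refine Finset.sum_congr rfl fun c _ => ?_
      split_ifs with h2
      · congr 1
        funext q
        rw [hlt _ (blocksFun_lt_aux hm0 h2 q)]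
      · rfl
  have hcod : codiffSum R V V' fs' a.op m W = S1 + T := by
    unfold codiffSum
    have hIcc : Finset.Icc 1 m = insert 1 (Finset.Icc 2 m) := by
      ext x; simp only [Finset.mem_Icc, Finset.mem_insert]; omega
    rw [hIcc, Finset.sum_insert (by simp)]
    congr 1
    · rw [hS1, show m - 1 + 1 = m from by omega]
      refine Finset.sum_congr rfl fun i _ => ?_
      congr 1
      unfold evalAt
      rw [hfm]
    · rw [hT]
      refine Finset.sum_congr rfl fun l hl => ?_
      rw [Finset.mem_Icc] at hl
      refine Finset.sum_congr rfl fun i _ => ?_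
      congr 1
      unfold evalAt
      rw [hlt _ (by omega)]
  have hobs : obstrVal R V V' b.op fs a.op m W = S2 - T := by
    rw [hS2, hT]; rfl
  have hdbar : dbarVal R V V' b.op a.op
      (fun w' => g fun t => inclS R V (w' t.val)) 0 m W = L1 - S1 := by
    rw [hL1, hS1]
    unfold dbarVal
    norm_num [sgn]
  rw [hmorph, hcod, hobs, hdbar]
  exact key_iff_aux L1 S1 S2 T

end AInf
end

section
/- Let R be a commutative unital ring. Let A = R⟨x⟩ be the free associative R-algebra on a generator x of degree 0 with zero differential, regarded as an A∞-algebra (A,0,μ) with μ₂ the multiplication and μ_n = 0 for n ≥ 3. Let A' = R⟨x,u,ū⟩ be the free associative R-algebra on generators x (degree 0), u (degree 2), ū (degree 1) with differential determined by d'x = d'ū = 0 and d'u = ū, regarded as an A∞-algebra (A',d',μ') with μ'₂ the multiplication and μ'_n = 0 for n ≥ 3, and let f₁ : A → A' be the algebra inclusion determined by f₁(x) = x (so the strict morphism (f₁,0,0,…) is an A∞-quasi-isomorphism). Then: (a) the unique chain map g₁ : (A',d') → (A,0) admitting a degree +1 map h : A → A with g₁f₁ − id_A = 0·h + h·0 is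 given by g₁(x^k) = x^k for k ≥ 0 and g₁ = 0 on all other monomials, and necessarily h = 0; (b) the resulting transferred A∞-structure ν on (A',d'), given by ν₂ = f₁∘μ₂∘(g₁⊗g₁) and ν_n = 0 for n ≥ 3 (equivalently, ν₂(a,b) = ab if both a and b are R-linear combinations of powers of x and ν₂(a,b) = 0 otherwise), is neither equal to nor strictly isomorphic to (A',d',μ'). -/
/-!
# A common framework for `A∞`-algebras over a commutative ring

A (homologically) ℤ-graded `R`-module is encoded as a family `V : ℤ → Type` of
`R`-modules.  Throughout, all A∞-data is encoded by its *bar components*: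
for an A∞-algebra `(A, d, μ)` the family `V` stands for the suspension `↑A`
(so `V k = A (k-1)`), and the structure is recorded through the components of
the bar codifferential, `op 1 = ↑∘d∘↓` and `op n = ↑∘μₙ∘↓^{⊗n}` (`n ≥ 2`),
all of which are homogeneous of degree `-1`.  Likewise a weak A∞-morphism
`(f₁, f₂, …)` is recorded through its bar components `F¹ₙ = ↑∘fₙ∘↓^{⊗n}`,
homogeneous of degree `0`.  This passage is the bijective correspondence
`μ ↔ δ`, `f ↔ F` described in the paper.

A map out of the tensor power `(↑A)^{⊗n}` into a graded module corresponds to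
a multilinear map on the direct sum `⨁ₖ V k` (evaluated on tuples of
homogeneous elements); equalities of such maps are recorded by their values on
all tuples of homogeneous elements, which generate the tensor power.
All Koszul signs are explicit.
-/

open DirectSum Finset

namespace AInf

/-!
## The free dg algebras `R⟨x⟩` and `R⟨x, u, ū⟩`

The free associative algebra `A' = R⟨x,u,ū⟩` on generators `x` (degree `0`),
`u` (degree `2`), `ū` (degree `1`) has basis the words in the three letters;
we encode the letters as `0, 1, 2 : Fin 3` (`x, u, ū` respectively).  On the
bar side (cf. the convention of this file) the graded module `FA` has
`FA k = ` the span of the words of weight `k - 1`.  Similarly `A = R⟨x⟩` is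
concentrated in degree `0` with basis `xⁿ`, `n : ℕ`, so `FX k` is spanned by
`ℕ` when `k = 1` and vanishes otherwise. -/

variable (R : Type) [CommRing R]

/-- Degrees of the generators `x, u, ū`. -/
def gdeg : Fin 3 → ℕ := ![0, 2, 1]

/-- The weight (= degree in `A'`) of a word. -/
def wt (w : List (Fin 3)) : ℤ := (w.map fun a => ((gdeg a : ℕ) : ℤ)).sum

/-- The suspension of the free algebra `R⟨x,u,ū⟩`: `FA k` is spanned by the
words of weight `k - 1`. -/
abbrev FA : ℤ → Type := fun k => {w : List (Fin 3) // wt w = k - 1} →₀ R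

/-- The suspension of the free algebra `R⟨x⟩ ⊆ R⟨x,u,ū⟩` on the degree `0`
generator `x`: concentrated in (bar) degree `1`, with basis `xⁿ`, `n : ℕ`. -/
abbrev FX : ℤ → Type := fun k => {_n : ℕ // k = 1} →₀ R

/-- The homogeneous basis element of `⨁ FA` given by a word. -/
noncomputable def wordEl (w : List (Fin 3)) : GTot R (FA R) :=
  inclS R (FA R) ⟨wt w + 1, Finsupp.single ⟨w, by omega⟩ 1⟩

/-- The homogeneous basis element `xⁿ` of `⨁ FX`. -/
noncomputable def xel (n : ℕ) : GTot R (FX R) :=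
  inclS R (FX R) ⟨1, Finsupp.single ⟨n, rfl⟩ 1⟩

lemma wt_replicate (n : ℕ) : wt (List.replicate n (0 : Fin 3)) = 0 := by
  simp [wt, gdeg]

/-- The inclusion `f₁ : R⟨x⟩ → R⟨x,u,ū⟩`, `x ↦ x` (on the bar side). -/
noncomputable def incF (k : ℤ) : FX R k →ₗ[R] FA R k :=
  Finsupp.lmapDomain R R (fun p =>
    ⟨List.replicate p.1 0, by rw [wt_replicate]; omega⟩)

end AInf

namespace AInf

variable {R : Type} [CommRing R] [Nontrivial R]

lemma update_fin2_zero {M : Type} (p p' q : M) :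
    Function.update ![p, q] (0 : Fin 2) p' = ![p', q] := by
  funext i; fin_cases i <;> simp

lemma update_fin2_one {M : Type} (p q q' : M) :
    Function.update ![p, q] (1 : Fin 2) q' = ![p, q'] := by
  funext i; fin_cases i <;> simp

lemma wt_eq_zero_of_all_zero {w : List (Fin 3)} (h : ∀ c ∈ w, c = 0) : wt w = 0 := by
  unfold wt
  apply List.sum_eq_zero
  intro y hy
  obtain ⟨c, hc, rfl⟩ := List.mem_map.mp hy
  rw [h c hc]
  simp [gdeg]

lemma inclS_cast (w : List (Fin 3)) {j : ℤ} (hw : wt w = j - 1) :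
    inclS R (FA R) ⟨j, Finsupp.single ⟨w, hw⟩ 1⟩ = wordEl R w := by
  unfold wordEl
  have h : j = wt w + 1 := by omega
  subst h
  rfl

lemma wordEl_ne_zero (w : List (Fin 3)) : wordEl R w ≠ 0 := by
  intro h0
  have h1 := congrArg (cmp R (FA R) (wt w + 1)) h0
  unfold wordEl inclS cmp at h1
  rw [DirectSum.component.lof_self, map_zero] at h1
  exact one_ne_zero (Finsupp.single_eq_zero.mp h1)

lemma wt_ubar : wt [(2 : Fin 3)] = 1 := by simp [wt, gdeg]

lemma sgn_two : sgn (1 + 1) = 1 := by norm_num [sgn]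

lemma nu2_vanish (ν : AInfty R (FA R))
    (hv2 : ∀ w₁ w₂ : List (Fin 3),
      ν.op 2 ![wordEl R w₁, wordEl R w₂]
        = if (∀ c ∈ w₁, c = 0) ∧ (∀ c ∈ w₂, c = 0) then
            sgn (wt w₁ + 1) • wordEl R (w₁ ++ w₂)
          else 0)
    (v₁ v₂ : FA R 2) :
    ν.op 2 ![inclS R (FA R) ⟨2, v₁⟩, inclS R (FA R) ⟨2, v₂⟩] = 0 := by
  have add_left : ∀ p p' q : GTot R (FA R),
      ν.op 2 ![p + p', q] = ν.op 2 ![p, q] + ν.op 2 ![p', q] := by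
    intro p p' q
    simpa [update_fin2_zero] using (ν.op 2).map_update_add ![p, q] 0 p p'
  have add_right : ∀ p q q' : GTot R (FA R),
      ν.op 2 ![p, q + q'] = ν.op 2 ![p, q] + ν.op 2 ![p, q'] := by
    intro p q q'
    simpa [update_fin2_one] using (ν.op 2).map_update_add ![p, q] 1 q q'
  have smul_left : ∀ (r : R) (p q : GTot R (FA R)),
      ν.op 2 ![r • p, q] = r • ν.op 2 ![p, q] := by
    intro r p q
    simpa [update_fin2_zero] using (ν.op 2).map_update_smul ![p, q] 0 r p
  have smul_right : ∀ (r : R) (p q : GTot R (FA R)),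
      ν.op 2 ![p, r • q] = r • ν.op 2 ![p, q] := by
    intro r p q
    simpa [update_fin2_one] using (ν.op 2).map_update_smul ![p, q] 1 r q
  have zero_left : ∀ q : GTot R (FA R), ν.op 2 ![0, q] = 0 := by
    intro q
    exact (ν.op 2).map_coord_zero 0 (by simp)
  have zero_right : ∀ p : GTot R (FA R), ν.op 2 ![p, 0] = 0 := by
    intro p
    exact (ν.op 2).map_coord_zero 1 (by simp)
  have incl_add : ∀ v v' : FA R 2,
      inclS R (FA R) ⟨2, v + v'⟩ = inclS R (FA R) ⟨2, v⟩ + inclS R (FA R) ⟨2, v'⟩ := by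
    intro v v'; exact map_add _ _ _
  have incl_smul : ∀ (r : R) (v : FA R 2),
      inclS R (FA R) ⟨2, r • v⟩ = r • inclS R (FA R) ⟨2, v⟩ := by
    intro r v; exact map_smul _ _ _
  have incl_zero : inclS R (FA R) ⟨2, (0 : FA R 2)⟩ = 0 := map_zero _
  have key : ∀ (a₁ a₂ : {w : List (Fin 3) // wt w = 2 - 1}),
      ν.op 2 ![inclS R (FA R) ⟨2, Finsupp.single a₁ (1 : R)⟩,
               inclS R (FA R) ⟨2, Finsupp.single a₂ (1 : R)⟩] = 0 := by
    rintro ⟨w₁, h₁⟩ ⟨w₂, h₂⟩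
    rw [inclS_cast w₁ h₁, inclS_cast w₂ h₂, hv2 w₁ w₂, if_neg]
    rintro ⟨c₁, -⟩
    have := wt_eq_zero_of_all_zero c₁
    omega
  induction v₁ using Finsupp.induction_linear with
  | zero => rw [incl_zero]; exact zero_left _
  | add f g hf hg => rw [incl_add, add_left, hf, hg, add_zero]
  | single a₁ r₁ =>
    induction v₂ using Finsupp.induction_linear with
    | zero => rw [incl_zero]; exact zero_right _
    | add f g hf hg => rw [incl_add, add_right, hf, hg, add_zero]
    | single a₂ r₂ =>
      have e₁ : Finsupp.single a₁ r₁ = r₁ • Finsupp.single a₁ (1 : R) := by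
        rw [Finsupp.smul_single, smul_eq_mul, mul_one]
      have e₂ : Finsupp.single a₂ r₂ = r₂ • Finsupp.single a₂ (1 : R) := by
        rw [Finsupp.smul_single, smul_eq_mul, mul_one]
      rw [e₁, e₂, incl_smul, incl_smul, smul_left, smul_right, key, smul_zero, smul_zero]

/-- Sec. `sec:str-vs-quasi` of the paper.  Let `A = R⟨x⟩`
with zero differential and `A' = R⟨x,u,ū⟩` with `d'x = d'ū = 0`, `d'u = ū`,
both regarded as A∞-algebras (dg algebras: `μ₂` the multiplication, `μₙ = 0`
for `n ≥ 3`; the hypotheses prescribe the corresponding bar components,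
Koszul signs included, on basis elements — which determines them), and let
`f₁ : A → A'` be the inclusion `x ↦ x`.  Then: (a) any chain map
`g₁ : (A',d') → (A,0)` with `g₁f₁ = id` (i.e. admitting a homotopy `h` with
`g₁f₁ − id = 0·h + h·0`) is given by `g₁(xᵏ) = xᵏ` and vanishes on all other
monomials (those of nonzero degree), and necessarily any degree `+1` map
`h : A → A` is `0`; (b) the resulting transferred A∞-structure `ν`, with
`ν₂(a,b) = ab` when both arguments are polynomials in `x` and `ν₂(a,b) = 0`
otherwise, and `νₙ = 0` for `n ≥ 3`, is neither equal to nor strictly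
isomorphic to `(A',d',μ')`. -/
theorem statement18
    (a : AInfty R (FX R)) (b ν : AInfty R (FA R))
    -- `A = R⟨x⟩`: zero differential, multiplication `xᵐ · xⁿ = x^{m+n}`
    (ha1 : a.op 1 = 0)
    (ha2 : ∀ m n : ℕ, a.op 2 ![xel R m, xel R n] = - xel R (m + n))
    (ha3 : ∀ n, 3 ≤ n → a.op n = 0)
    -- `A' = R⟨x,u,ū⟩`: differential the derivation with `d'u = ū`,
    -- multiplication the concatenation of words
    (hb1 : ∀ w : List (Fin 3),
      b.op 1 ![wordEl R w]
        = ∑ i ∈ Finset.range w.length,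
            if w.getD i 0 = 1 then sgn (wt (w.take i)) • wordEl R (w.set i 2) else 0)
    (hb2 : ∀ w₁ w₂ : List (Fin 3),
      b.op 2 ![wordEl R w₁, wordEl R w₂] = sgn (wt w₁ + 1) • wordEl R (w₁ ++ w₂))
    (hb3 : ∀ n, 3 ≤ n → b.op n = 0)
    -- the transferred structure `ν`
    (hv1 : ν.op 1 = b.op 1)
    (hv2 : ∀ w₁ w₂ : List (Fin 3),
      ν.op 2 ![wordEl R w₁, wordEl R w₂]
        = if (∀ c ∈ w₁, c = 0) ∧ (∀ c ∈ w₂, c = 0) then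
            sgn (wt w₁ + 1) • wordEl R (w₁ ++ w₂)
          else 0)
    (hv3 : ∀ n, 3 ≤ n → ν.op n = 0) :
    -- (a) uniqueness of the left homotopy inverse `g₁`, and `h = 0`
    ((∀ g : ∀ k, FA R k →ₗ[R] FX R k,
        IsChainMapD R (FA R) (FX R) (dOf R (FA R) b) (dOf R (FX R) a) g →
        (∀ (k : ℤ) (x : FX R k), g k (incF R k x) = x) →
        (∀ n : ℕ,
          g 1 (Finsupp.single ⟨List.replicate n 0, by rw [wt_replicate]; omega⟩ 1)
            = Finsupp.single ⟨n, rfl⟩ 1) ∧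
        (∀ k : ℤ, k ≠ 1 → g k = 0)) ∧
      (∀ h : ∀ k, FX R k →ₗ[R] FX R (k + 1), ∀ k, h k = 0)) ∧
    -- (b) `ν` is neither equal nor strictly isomorphic to `μ'`
    (¬ (ν.op = b.op) ∧
      ¬ ∃ e : ∀ k, FA R k ≃ₗ[R] FA R k, IsStrictIso R (FA R) ν b e) := by
  constructor
  · constructor
    · intro g _ hid
      constructor
      · intro n
        have h := hid 1 (Finsupp.single ⟨n, rfl⟩ 1)
        simp only [incF, Finsupp.lmapDomain_apply, Finsupp.mapDomain_single] at h
        exact h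
      · intro k hk
        haveI : IsEmpty {_n : ℕ // k = 1} := ⟨fun p => hk p.2⟩
        haveI : Subsingleton (FX R k) := Unique.instSubsingleton
        exact Subsingleton.elim _ _
    · intro h k
      by_cases hk : k = 0
      · subst hk
        haveI : IsEmpty {_n : ℕ // (0 : ℤ) = 1} := ⟨fun p => by omega⟩
        haveI : Subsingleton (FX R 0) := Unique.instSubsingleton
        apply LinearMap.ext
        intro v
        rw [Subsingleton.elim v 0, map_zero]
        rfl
      · haveI : IsEmpty {_n : ℕ // k + 1 = 1} := ⟨fun p => hk (by omega)⟩
        haveI : Subsingleton (FX R (k + 1)) := Unique.instSubsingleton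
        exact Subsingleton.elim _ _
  · constructor
    · intro heq
      have h1 := hv2 [2] [2]
      rw [heq, hb2 [2] [2], if_neg (by rintro ⟨c₁, -⟩; exact absurd (c₁ 2 (by simp)) (by decide))]
        at h1
      rw [wt_ubar] at h1
      rw [sgn_two, one_smul] at h1
      exact wordEl_ne_zero _ h1
    · rintro ⟨e, he⟩
      set s : FA R 2 := Finsupp.single ⟨[2], by norm_num [wt, gdeg]; rfl⟩ 1 with hs
      set v : FA R 2 := (e 2).symm s with hv
      have hkey := he 2 ![⟨2, v⟩, ⟨2, v⟩]
      have hfun : (fun i : Fin 2 => inclS R (FA R) ((![⟨2, v⟩, ⟨2, v⟩] : Fin 2 → GElt (FA R)) i))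
          = ![inclS R (FA R) ⟨2, v⟩, inclS R (FA R) ⟨2, v⟩] := by
        funext i; fin_cases i <;> rfl
      have hfun' : (fun i : Fin 2 =>
            inclS R (FA R)
              ⟨((![⟨2, v⟩, ⟨2, v⟩] : Fin 2 → GElt (FA R)) i).1,
                e ((![⟨2, v⟩, ⟨2, v⟩] : Fin 2 → GElt (FA R)) i).1
                  ((![⟨2, v⟩, ⟨2, v⟩] : Fin 2 → GElt (FA R)) i).2⟩)
          = ![inclS R (FA R) ⟨2, e 2 v⟩, inclS R (FA R) ⟨2, e 2 v⟩] := by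
        funext i; fin_cases i <;> rfl
      rw [hfun, hfun', nu2_vanish ν hv2 v v, map_zero] at hkey
      have hev : e 2 v = s := (e 2).apply_symm_apply s
      rw [hev, hs, inclS_cast [2] (by norm_num [wt, gdeg]; rfl), hb2 [2] [2], wt_ubar, sgn_two, one_smul]
        at hkey
      exact wordEl_ne_zero _ hkey.symm

end AInf
end
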